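/- Let V be a normed real vector space with Module.finrank ℝ V = 2 which is a strictly convex space (StrictConvexSpace ℝ V). If S ⊆ V is a set of points such that for all p, q ∈ S the distance ‖p − q‖ is a (nonnegative) integer, then S is finite or S is collinear (Collinear ℝ S). -/

import Mathlib

open Filter Set

section Slope

variable {V : Type*} [NormedAddCommGroup V] [NormedSpace ℝ V] [StrictConvexSpace ℝ V]
variable (u s : V)

/-- the section of the norm along the line `u + t s` -/
noncomputable def EAn (t : ℝ) : ℝ := ‖u + t • s‖

/-- slope of `EAn` -/
noncomputable def EASl (t₁ t₂ : ℝ) : ℝ := (EAn u s t₂ - EAn u s t₁) / (t₂ - t₁)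

variable {u s}
variable (hind : ∀ α β : ℝ, α • u + β • s = 0 → α = 0 ∧ β = 0)

include hind

theorem EAn_strict {t₁ t₂ t₃ : ℝ} (h12 : t₁ < t₂) (h23 : t₂ < t₃) :
    EAn u s t₂ * (t₃ - t₁) < EAn u s t₁ * (t₃ - t₂) + EAn u s t₃ * (t₂ - t₁) := by
  set lam : ℝ := (t₃ - t₂) / (t₃ - t₁) with hlam
  set mu : ℝ := (t₂ - t₁) / (t₃ - t₁) with hmu
  have h13 : (0:ℝ) < t₃ - t₁ := by linarith
  have hlam0 : 0 < lam := div_pos (by linarith) h13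
  have hmu0 : 0 < mu := div_pos (by linarith) h13
  set A : V := u + t₁ • s with hA
  set B : V := u + t₃ • s with hB
  have hA0 : A ≠ 0 := by
    intro h
    have h' : (1:ℝ) • u + t₁ • s = 0 := by rw [one_smul]; exact h
    exact one_ne_zero (hind 1 t₁ h').1
  have hB0 : B ≠ 0 := by
    intro h
    have h' : (1:ℝ) • u + t₃ • s = 0 := by rw [one_smul]; exact h
    exact one_ne_zero (hind 1 t₃ h').1
  have hkey : lam • A + mu • B = u + t₂ • s := by
    have h1 : lam + mu = 1 := by rw [hlam, hmu]; field_simp; ring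
    have h2 : lam * t₁ + mu * t₃ = t₂ := by rw [hlam, hmu]; field_simp; ring
    have : lam • A + mu • B = (lam + mu) • u + (lam * t₁ + mu * t₃) • s := by
      simp only [hA, hB, smul_add, smul_smul, add_smul]; abel
    rw [this, h1, h2, one_smul]
  have hnotray : ¬ SameRay ℝ (lam • A) (mu • B) := by
    intro hray
    obtain ⟨r₁, r₂, hr₁, hr₂, hr⟩ := hray.exists_pos (smul_ne_zero hlam0.ne' hA0)
      (smul_ne_zero hmu0.ne' hB0)
    rw [smul_smul, smul_smul] at hr
    have : (r₁ * lam - r₂ * mu) • u + (r₁ * lam * t₁ - r₂ * mu * t₃) • s = 0 := by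
      have : (r₁ * lam) • (u + t₁ • s) - (r₂ * mu) • (u + t₃ • s) = 0 := by
        rw [hr]; abel
      rw [smul_add, smul_add, smul_smul, smul_smul] at this
      rw [sub_smul, sub_smul]
      rw [← this]; abel
    obtain ⟨e1, e2⟩ := hind _ _ this
    have hrr : r₁ * lam = r₂ * mu := by linarith
    have hpos : 0 < r₁ * lam := by positivity
    have h4 : r₁ * lam * t₁ = r₁ * lam * t₃ := by
      have h3 : r₁ * lam * t₃ = r₂ * mu * t₃ := by rw [hrr]
      linarith
    have h5 : t₁ = t₃ := mul_left_cancel₀ hpos.ne' h4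
    linarith
  have hlt : ‖lam • A + mu • B‖ < ‖lam • A‖ + ‖mu • B‖ := norm_add_lt_of_not_sameRay hnotray
  rw [hkey, norm_smul, norm_smul, Real.norm_eq_abs, Real.norm_eq_abs,
    abs_of_pos hlam0, abs_of_pos hmu0] at hlt
  have e1 : EAn u s t₂ < lam * EAn u s t₁ + mu * EAn u s t₃ := hlt
  have : lam = (t₃ - t₂) / (t₃ - t₁) := hlam
  have h13' : t₃ - t₁ ≠ 0 := h13.ne'
  rw [hlam, hmu] at e1
  calc EAn u s t₂ * (t₃ - t₁)
      < ((t₃ - t₂) / (t₃ - t₁) * EAn u s t₁ + (t₂ - t₁) / (t₃ - t₁) * EAn u s t₃) * (t₃ - t₁) := by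
        exact mul_lt_mul_of_pos_right e1 h13
    _ = EAn u s t₁ * (t₃ - t₂) + EAn u s t₃ * (t₂ - t₁) := by field_simp

theorem EASl_lt {t₁ t₂ t₃ : ℝ} (h12 : t₁ < t₂) (h23 : t₂ < t₃) :
    EASl u s t₁ t₂ < EASl u s t₂ t₃ := by
  have h := EAn_strict hind h12 h23
  rw [EASl, EASl, div_lt_div_iff₀ (by linarith) (by linarith)]
  nlinarith

theorem EASl_zero_mono {t t' : ℝ} (ht : 0 < t) (htt' : t < t') :
    EASl u s 0 t < EASl u s 0 t' := by
  have h := EAn_strict hind ht htt'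
  rw [EASl, EASl, sub_zero, sub_zero, div_lt_div_iff₀ ht (by linarith)]
  nlinarith

end Slope
section SlopeInf

variable {V : Type*} [NormedAddCommGroup V] [NormedSpace ℝ V] [StrictConvexSpace ℝ V]
variable (u s : V)

noncomputable def EAc : ℝ := sInf ((fun t => EASl u s 0 t) '' Set.Ioi (0:ℝ))

variable {u s}
variable (hind : ∀ α β : ℝ, α • u + β • s = 0 → α = 0 ∧ β = 0)

include hind

theorem EA_bddBelow : ∀ y ∈ (fun t => EASl u s 0 t) '' Set.Ioi (0:ℝ), EASl u s (-1) 0 ≤ y := by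
  rintro y ⟨t, ht, rfl⟩
  exact (EASl_lt hind (by norm_num) ht).le

theorem EAc_le {t : ℝ} (ht : 0 < t) : EAc u s ≤ EASl u s 0 t :=
  csInf_le ⟨_, EA_bddBelow hind⟩ ⟨t, ht, rfl⟩

theorem EAc_lt {t : ℝ} (ht : 0 < t) : EAc u s < EASl u s 0 t :=
  lt_of_le_of_lt (EAc_le hind (by linarith : (0:ℝ) < t/2))
    (EASl_zero_mono hind (by linarith) (by linarith))

theorem EAc_small {ε : ℝ} (hε : 0 < ε) :
    ∃ δ > 0, ∀ t : ℝ, 0 < t → t ≤ δ → EASl u s 0 t < EAc u s + ε := by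
  have hne : ((fun t => EASl u s 0 t) '' Set.Ioi (0:ℝ)).Nonempty := ⟨_, 1, by norm_num, rfl⟩
  obtain ⟨y, ⟨t₀, ht₀, rfl⟩, hy⟩ := exists_lt_of_csInf_lt hne
    (show EAc u s < EAc u s + ε by linarith)
  refine ⟨t₀, ht₀, fun t ht htt₀ => ?_⟩
  rcases eq_or_lt_of_le htt₀ with h | h
  · rw [h]; exact hy
  · exact (EASl_zero_mono hind ht h).trans hy

open Filter in
theorem EA_keylemma (j : ℝ) (H x : ℕ → ℝ)
    (hH : Tendsto H atTop atTop) (hx : Tendsto x atTop atTop)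
    (hratio : Tendsto (fun l => x l / H l) atTop (nhds 0))
    (hcon : ∀ l, ‖H l • u + x l • s‖ - ‖H l • u + (x l - 1) • s‖ = j) : False := by
  have hsl : ∀ᶠ l in atTop, j = EASl u s ((x l - 1) / H l) (x l / H l) ∧
      0 < (x l - 1) / H l ∧ (x l - 1) / H l < x l / H l := by
    filter_upwards [hH.eventually_gt_atTop 0, hx.eventually_gt_atTop 1] with l hHl hxl
    have hnorm : ∀ y : ℝ, ‖H l • u + y • s‖ = H l * EAn u s (y / H l) := by
      intro y
      have h1 : H l • u + y • s = H l • (u + (y / H l) • s) := by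
        rw [smul_add, smul_smul, mul_div_cancel₀ _ hHl.ne']
      rw [h1, norm_smul, Real.norm_eq_abs, abs_of_pos hHl]; rfl
    have hdiff : x l / H l - (x l - 1) / H l = 1 / H l := by field_simp; ring
    have hEASl : EASl u s ((x l - 1) / H l) (x l / H l)
        = (EAn u s (x l / H l) - EAn u s ((x l - 1) / H l)) * H l := by
      rw [EASl, hdiff, one_div, div_eq_mul_inv, inv_inv]
    refine ⟨?_, div_pos (by linarith) hHl, by
      rw [div_lt_div_iff_of_pos_right hHl]; linarith⟩
    rw [hEASl]
    have := hcon l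
    rw [hnorm (x l), hnorm (x l - 1)] at this
    rw [← this]; ring
  obtain ⟨l₀, hj₀, ht'₀, ht₀⟩ := hsl.exists
  have hjc : EAc u s < j := by
    have h1 : EASl u s 0 ((x l₀ - 1) / H l₀) < EASl u s ((x l₀ - 1) / H l₀) (x l₀ / H l₀) :=
      EASl_lt hind ht'₀ ht₀
    have h2 := EAc_lt hind ht'₀
    linarith [hj₀]
  set ε : ℝ := (j - EAc u s) / 2 with hε
  have hεpos : 0 < ε := by rw [hε]; linarith
  obtain ⟨δ, hδ, hδsmall⟩ := EAc_small hind hεpos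
  have hev : ∀ᶠ l in atTop, x l / H l < δ / 2 :=
    hratio.eventually_lt_const (by linarith)
  obtain ⟨m, ⟨hjm, ht'm, htm⟩, hsmallm⟩ := (hsl.and hev).exists
  set t : ℝ := x m / H m with htdef
  set t' : ℝ := (x m - 1) / H m with ht'def
  have htpos : 0 < t := lt_trans ht'm htm
  clear_value t t'
  have h1 : j < EASl u s t (2 * t) := by
    rw [hjm]; exact EASl_lt hind htm (by linarith)
  have hid : EASl u s t (2 * t) = 2 * EASl u s 0 (2 * t) - EASl u s 0 t := by
    rw [EASl, EASl, EASl, sub_zero, sub_zero, show (2:ℝ) * t - t = t by ring]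
    rw [show 2 * ((EAn u s (2 * t) - EAn u s 0) / (2 * t)) = (EAn u s (2 * t) - EAn u s 0) / t from by
      rw [mul_div_assoc']; exact mul_div_mul_left _ _ two_ne_zero]
    rw [div_sub_div_same]
    congr 1
    ring
  have h2 : EASl u s 0 (2 * t) < EAc u s + ε := hδsmall _ (by linarith) (by linarith)
  have h3 : EAc u s ≤ EASl u s 0 t := EAc_le hind htpos
  rw [hid] at h1
  rw [hε] at *
  linarith

end SlopeInf
open Filter in
theorem EA_bddAbove_of_no_subseq (f : ℕ → ℝ)
    (h : ∀ φ : ℕ → ℕ, StrictMono φ → ¬ Tendsto (f ∘ φ) atTop atTop) :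
    BddAbove (Set.range f) := by
  by_contra hna
  have hfreq : ∀ n : ℕ, ∃ᶠ k in atTop, (n : ℝ) ≤ f k := by
    intro n
    by_contra hno
    rw [Filter.not_frequently] at hno
    simp only [not_le] at hno
    obtain ⟨N, hN⟩ := eventually_atTop.mp hno
    apply hna
    have hfin : (f '' Set.Iio N).Finite := (Set.finite_Iio N).image f
    obtain ⟨M, hM⟩ := hfin.bddAbove
    refine ⟨max M n, ?_⟩
    rintro y ⟨k, rfl⟩
    rcases lt_or_ge k N with hk | hk
    · exact le_max_of_le_left (hM ⟨k, hk, rfl⟩)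
    · exact le_max_of_le_right (hN k hk).le
  obtain ⟨φ, hφ, hφf⟩ := Filter.extraction_forall_of_frequently hfreq
  exact h φ hφ (tendsto_atTop_mono hφf tendsto_natCast_atTop_atTop)

open Filter in
theorem EA_exists_far {V : Type*} [NormedAddCommGroup V] [NormedSpace ℝ V] [ProperSpace V]
    {S : Set V} (hinf : S.Infinite)
    (hsep : ∀ p ∈ S, ∀ q ∈ S, p ≠ q → 1 ≤ ‖p - q‖) (a : V) (R : ℝ) :
    ∃ p ∈ S, R < ‖p - a‖ := by
  by_contra h
  push_neg at h
  set e := hinf.natEmbedding with he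
  have hsub : ∀ n : ℕ, (e n : V) ∈ Metric.closedBall a R := fun n => by
    rw [Metric.mem_closedBall, dist_eq_norm]
    exact h _ (e n).2
  obtain ⟨z, _, φ, hφ, hconv⟩ := (isCompact_closedBall a R).tendsto_subseq hsub
  obtain ⟨N, hN⟩ := Metric.tendsto_atTop.mp hconv (1/2) (by norm_num)
  have h1 := hN N le_rfl
  have h2 := hN (N + 1) (by omega)
  have hne : (e (φ N) : V) ≠ (e (φ (N + 1)) : V) := by
    intro hval
    have : e (φ N) = e (φ (N + 1)) := Subtype.ext hval
    have := e.injective this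
    exact (hφ (by omega : N < N + 1)).ne this
  have hsep' := hsep _ (e (φ N)).2 _ ((e (φ (N + 1))).2) hne
  rw [← dist_eq_norm] at hsep'
  have := dist_triangle ((e (φ N)) : V) z ((e (φ (N + 1))) : V)
  simp only [Function.comp] at h1 h2
  linarith [h1, h2, hsep', this, dist_comm z ((e (φ (N + 1))) : V)]
set_option maxHeartbeats 2000000 in
open Filter in
/-- Erdős–Anning theorem for 2-dimensional strictly convex distance functions:
a set with pairwise integer distances is finite or collinear. -/
theorem erdos_anning_strictly_convex
    {V : Type*} [NormedAddCommGroup V] [NormedSpace ℝ V]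
    (hdim : Module.finrank ℝ V = 2) [StrictConvexSpace ℝ V]
    (S : Set V) (hS : ∀ p ∈ S, ∀ q ∈ S, ∃ n : ℕ, ‖p - q‖ = n) :
    S.Finite ∨ Collinear ℝ S := by
  by_cases hfin : S.Finite
  · exact Or.inl hfin
  right
  by_contra hcol
  have hinf : S.Infinite := hfin
  haveI : FiniteDimensional ℝ V := FiniteDimensional.of_finrank_eq_succ hdim
  -- separation of distinct points
  have hsep : ∀ p ∈ S, ∀ q ∈ S, p ≠ q → 1 ≤ ‖p - q‖ := by
    intro p hp q hq hne
    obtain ⟨n, hn⟩ := hS p hp q hq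
    have hn0 : n ≠ 0 := by
      rintro rfl
      rw [Nat.cast_zero, norm_eq_zero, sub_eq_zero] at hn
      exact hne hn
    rw [hn]
    exact_mod_cast Nat.one_le_iff_ne_zero.mpr hn0
  -- three points a, b, c with b - a, c - a independent
  obtain ⟨a, haS⟩ := hinf.nonempty
  obtain ⟨b, hbS, hba⟩ : ∃ b ∈ S, b ≠ a := by
    by_contra hb
    push_neg at hb
    exact hcol ((collinear_iff_exists_forall_eq_smul_vadd S).mpr
      ⟨a, 0, fun p hp => ⟨0, by simp [hb p hp]⟩⟩)
  obtain ⟨c, hcS, hc⟩ : ∃ c ∈ S, ¬∃ r : ℝ, c - a = r • (b - a) := by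
    by_contra hcc
    push_neg at hcc
    refine hcol ((collinear_iff_exists_forall_eq_smul_vadd S).mpr ⟨a, b - a, fun p hp => ?_⟩)
    obtain ⟨r, hr⟩ := hcc p hp
    exact ⟨r, by rw [vadd_eq_add, ← hr]; abel⟩
  have hv0 : b - a ≠ 0 := sub_ne_zero.mpr hba
  -- a sequence of points escaping to infinity
  have hfar := fun l : ℕ => EA_exists_far hinf hsep a l
  choose p0 hp0S hp0far using hfar
  -- integer distances to a, b, c
  choose na hna using fun l => hS (p0 l) (hp0S l) a haS
  choose nb hnb using fun l => hS (p0 l) (hp0S l) b hbS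
  choose nc hnc using fun l => hS (p0 l) (hp0S l) c hcS
  -- pigeonhole: some pair of distance-differences occurs infinitely often
  set F : ℕ → ℤ × ℤ := fun l => ((na l : ℤ) - nb l, (na l : ℤ) - nc l) with hF
  have hbound : ∀ l, F l ∈ Set.Icc ((-⌈‖b - a‖⌉, -⌈‖c - a‖⌉) : ℤ × ℤ) (⌈‖b - a‖⌉, ⌈‖c - a‖⌉) := by
    intro l
    have h1 : |(na l : ℝ) - nb l| ≤ ‖b - a‖ := by
      rw [← hna, ← hnb]
      have h := abs_norm_sub_norm_le (p0 l - a) (p0 l - b)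
      rw [show p0 l - a - (p0 l - b) = b - a from by abel] at h
      exact h
    have h2 : |(na l : ℝ) - nc l| ≤ ‖c - a‖ := by
      rw [← hna, ← hnc]
      have h := abs_norm_sub_norm_le (p0 l - a) (p0 l - c)
      rw [show p0 l - a - (p0 l - c) = c - a from by abel] at h
      exact h
    rw [Set.mem_Icc]
    rw [abs_le] at h1 h2
    have hb1 := Int.le_ceil ‖b - a‖
    have hc1 := Int.le_ceil ‖c - a‖
    constructor <;> rw [Prod.le_def] <;> constructor
    · show (-⌈‖b - a‖⌉ : ℤ) ≤ (na l : ℤ) - nb l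
      have h : ((-⌈‖b - a‖⌉ : ℤ) : ℝ) ≤ (((na l : ℤ) - nb l : ℤ) : ℝ) := by push_cast; linarith [h1.1]
      exact_mod_cast h
    · show (-⌈‖c - a‖⌉ : ℤ) ≤ (na l : ℤ) - nc l
      have h : ((-⌈‖c - a‖⌉ : ℤ) : ℝ) ≤ (((na l : ℤ) - nc l : ℤ) : ℝ) := by push_cast; linarith [h2.1]
      exact_mod_cast h
    · show (na l : ℤ) - nb l ≤ ⌈‖b - a‖⌉
      have h : ((((na l : ℤ) - nb l) : ℤ) : ℝ) ≤ ((⌈‖b - a‖⌉ : ℤ) : ℝ) := by push_cast; linarith [h1.2]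
      exact_mod_cast h
    · show (na l : ℤ) - nc l ≤ ⌈‖c - a‖⌉
      have h : ((((na l : ℤ) - nc l) : ℤ) : ℝ) ≤ ((⌈‖c - a‖⌉ : ℤ) : ℝ) := by push_cast; linarith [h2.2]
      exact_mod_cast h
  obtain ⟨z, hzinf⟩ : ∃ z : ℤ × ℤ, {l | F l = z}.Infinite := by
    by_contra hfib
    push_neg at hfib
    have huniv : (Set.univ : Set ℕ) ⊆ ⋃ z ∈ Set.Icc ((-⌈‖b - a‖⌉, -⌈‖c - a‖⌉) : ℤ × ℤ)
        (⌈‖b - a‖⌉, ⌈‖c - a‖⌉), {l | F l = z} :=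
      fun l _ => Set.mem_biUnion (hbound l) rfl
    exact Set.infinite_univ (((Set.finite_Icc _ _).biUnion (fun z _ => hfib z)).subset huniv)
  obtain ⟨φ₁, hφ₁, hFz⟩ :=
    Filter.extraction_of_frequently_atTop (Nat.frequently_atTop_iff_infinite.mpr hzinf)
  set jb : ℝ := (z.1 : ℝ) with hjbdef
  set jc : ℝ := (z.2 : ℝ) with hjcdef
  set p1 : ℕ → V := p0 ∘ φ₁ with hp1
  have hp1S : ∀ k, p1 k ∈ S := fun k => hp0S _
  have hp1far : ∀ k : ℕ, (k : ℝ) < ‖p1 k - a‖ := fun k =>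
    lt_of_le_of_lt (by exact_mod_cast hφ₁.le_apply) (hp0far (φ₁ k))
  have hp1b : ∀ k, ‖p1 k - a‖ - ‖p1 k - b‖ = jb := by
    intro k
    have h1 := congrArg Prod.fst (hFz k)
    simp only [hF] at h1
    rw [hp1, Function.comp_apply, hna (φ₁ k), hnb (φ₁ k), hjbdef, ← h1]
    push_cast
    ring
  have hp1c : ∀ k, ‖p1 k - a‖ - ‖p1 k - c‖ = jc := by
    intro k
    have h1 := congrArg Prod.snd (hFz k)
    simp only [hF] at h1
    rw [hp1, Function.comp_apply, hna (φ₁ k), hnc (φ₁ k), hjcdef, ← h1]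
    push_cast
    ring
  -- directions converge along a subsequence
  have hr1pos : ∀ k : ℕ, (0 : ℝ) < ‖p1 k - a‖ := fun k =>
    lt_of_le_of_lt (Nat.cast_nonneg k) (hp1far k)
  have hwsphere : ∀ k : ℕ, ‖p1 k - a‖⁻¹ • (p1 k - a) ∈ Metric.sphere (0 : V) 1 := by
    intro k
    rw [mem_sphere_zero_iff_norm, norm_smul, Real.norm_eq_abs,
      abs_of_pos (inv_pos.mpr (hr1pos k)), inv_mul_cancel₀ (hr1pos k).ne']
  obtain ⟨u, huS, φ₂, hφ₂, hu⟩ := (isCompact_sphere (0 : V) 1).tendsto_subseq hwsphere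
  have hu1 : ‖u‖ = 1 := mem_sphere_zero_iff_norm.mp huS
  have hu0 : u ≠ 0 := by intro h; rw [h, norm_zero] at hu1; norm_num at hu1
  set p2 : ℕ → V := p1 ∘ φ₂ with hp2
  have hp2S : ∀ k, p2 k ∈ S := fun k => hp1S _
  have hp2far : ∀ k : ℕ, (k : ℝ) < ‖p2 k - a‖ := fun k =>
    lt_of_le_of_lt (by exact_mod_cast hφ₂.le_apply) (hp1far (φ₂ k))
  have hp2b : ∀ k, ‖p2 k - a‖ - ‖p2 k - b‖ = jb := fun k => hp1b (φ₂ k)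
  have hp2c : ∀ k, ‖p2 k - a‖ - ‖p2 k - c‖ = jc := fun k => hp1c (φ₂ k)
  have hr2pos : ∀ k : ℕ, (0 : ℝ) < ‖p2 k - a‖ := fun k =>
    lt_of_le_of_lt (Nat.cast_nonneg k) (hp2far k)
  have hdir : Tendsto (fun k => ‖p2 k - a‖⁻¹ • (p2 k - a)) atTop (nhds u) := hu
  -- choose the second basis vector among b - a, c - a
  obtain ⟨s, js, hcons, hindus⟩ : ∃ (s : V) (js : ℝ),
      (∀ k, ‖p2 k - a‖ - ‖(p2 k - a) - s‖ = js) ∧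
      (∀ α β : ℝ, α • u + β • s = 0 → α = 0 ∧ β = 0) := by
    have hgen : ∀ w : V, (¬∃ ρ : ℝ, w = ρ • u) →
        ∀ α β : ℝ, α • u + β • w = 0 → α = 0 ∧ β = 0 := by
      intro w hwu α β h
      by_cases hβ : β = 0
      · subst hβ
        rw [zero_smul, add_zero, smul_eq_zero] at h
        exact ⟨h.resolve_right hu0, rfl⟩
      · exfalso
        apply hwu
        have hsm : β • w = (-α) • u := by
          rw [neg_smul]; rw [add_comm] at h; exact eq_neg_of_add_eq_zero_left h
        refine ⟨β⁻¹ * (-α), ?_⟩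
        rw [← smul_smul, ← hsm, inv_smul_smul₀ hβ]
    by_cases hbu : ∃ ρ : ℝ, b - a = ρ • u
    · have hcu : ¬∃ ρ : ℝ, c - a = ρ • u := by
        rintro ⟨ρ', hρ'⟩
        obtain ⟨ρ, hρ⟩ := hbu
        have hρ0 : ρ ≠ 0 := by rintro rfl; rw [zero_smul] at hρ; exact hv0 hρ
        exact hc ⟨ρ' / ρ, by rw [hρ', hρ, smul_smul, div_mul_cancel₀ _ hρ0]⟩
      refine ⟨c - a, jc, fun k => ?_, hgen _ hcu⟩
      rw [show p2 k - a - (c - a) = p2 k - c from by abel]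
      exact hp2c k
    · refine ⟨b - a, jb, fun k => ?_, hgen _ hbu⟩
      rw [show p2 k - a - (b - a) = p2 k - b from by abel]
      exact hp2b k
  -- coordinates with respect to the basis (u, s)
  have hLI : LinearIndependent ℝ ![u, s] := LinearIndependent.pair_iff.mpr hindus
  have hcard : Fintype.card (Fin 2) = Module.finrank ℝ V := by rw [Fintype.card_fin, hdim]
  set B := basisOfLinearIndependentOfCardEqFinrank hLI hcard with hBdef
  have hBcoe : ⇑B = ![u, s] := coe_basisOfLinearIndependentOfCardEqFinrank hLI hcard
  have hB0 : B 0 = u := by rw [hBcoe]; rfl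
  have hB1 : B 1 = s := by rw [hBcoe]; rfl
  set χ0 : V →ₗ[ℝ] ℝ := B.coord 0 with hχ0def
  set χ1 : V →ₗ[ℝ] ℝ := B.coord 1 with hχ1def
  have hrepr : ∀ y : V, y = χ0 y • u + χ1 y • s := by
    intro y
    have h := B.sum_repr y
    rw [Fin.sum_univ_two, hB0, hB1] at h
    rw [hχ0def, hχ1def, Module.Basis.coord_apply, Module.Basis.coord_apply]
    exact h.symm
  have hχ0u : χ0 u = 1 := by
    rw [hχ0def, Module.Basis.coord_apply, ← hB0, B.repr_self]
    simp
  have hχ1u : χ1 u = 0 := by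
    rw [hχ1def, Module.Basis.coord_apply, ← hB0, B.repr_self]
    simp
  have hχ0cont : Continuous χ0 := χ0.continuous_of_finiteDimensional
  have hχ1cont : Continuous χ1 := χ1.continuous_of_finiteDimensional
  set Hs : ℕ → ℝ := fun k => χ0 (p2 k - a) with hHsdef
  set xs : ℕ → ℝ := fun k => χ1 (p2 k - a) with hxsdef
  have hHs : ∀ k, Hs k = ‖p2 k - a‖ * χ0 (‖p2 k - a‖⁻¹ • (p2 k - a)) := by
    intro k
    rw [map_smul, smul_eq_mul, ← mul_assoc, mul_inv_cancel₀ (hr2pos k).ne', one_mul]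
  have hxs : ∀ k, xs k = ‖p2 k - a‖ * χ1 (‖p2 k - a‖⁻¹ • (p2 k - a)) := by
    intro k
    rw [map_smul, smul_eq_mul, ← mul_assoc, mul_inv_cancel₀ (hr2pos k).ne', one_mul]
  have hg0 : Tendsto (fun k => χ0 (‖p2 k - a‖⁻¹ • (p2 k - a))) atTop (nhds 1) := by
    have h := (hχ0cont.tendsto u).comp hdir
    rwa [hχ0u] at h
  have hg1 : Tendsto (fun k => χ1 (‖p2 k - a‖⁻¹ • (p2 k - a))) atTop (nhds 0) := by
    have h := (hχ1cont.tendsto u).comp hdir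
    rwa [hχ1u] at h
  have hrtop : Tendsto (fun k => ‖p2 k - a‖) atTop atTop :=
    tendsto_atTop_mono (fun k => (hp2far k).le) tendsto_natCast_atTop_atTop
  have hHtop : Tendsto Hs atTop atTop := by
    rw [show Hs = fun k => ‖p2 k - a‖ * χ0 (‖p2 k - a‖⁻¹ • (p2 k - a)) from funext hHs]
    exact Tendsto.atTop_mul_pos one_pos hrtop hg0
  have hratio : Tendsto (fun k => xs k / Hs k) atTop (nhds 0) := by
    have hx' : ∀ k, xs k / Hs k
        = χ1 (‖p2 k - a‖⁻¹ • (p2 k - a)) / χ0 (‖p2 k - a‖⁻¹ • (p2 k - a)) := by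
      intro k
      rw [hHs k, hxs k, mul_div_mul_left _ _ (hr2pos k).ne']
    rw [funext hx']
    have h := hg1.div hg0 one_ne_zero
    simpa [Pi.div_def] using h
  -- the constraint in coordinates
  have hconstr : ∀ k, ‖Hs k • u + xs k • s‖ - ‖Hs k • u + (xs k - 1) • s‖ = js := by
    intro k
    have hrew : p2 k - a = Hs k • u + xs k • s := hrepr _
    have hrew2 : (p2 k - a) - s = Hs k • u + (xs k - 1) • s := by
      rw [hrew, sub_smul, one_smul]; abel
    rw [← hrew, ← hrew2]
    exact hcons k
  -- the transverse coordinate is bounded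
  have hnoup : ∀ ψ : ℕ → ℕ, StrictMono ψ → ¬ Tendsto (xs ∘ ψ) atTop atTop := by
    intro ψ hψ hcontra
    exact EA_keylemma hindus js (Hs ∘ ψ) (xs ∘ ψ) (hHtop.comp hψ.tendsto_atTop) hcontra
      (hratio.comp hψ.tendsto_atTop) (fun l => hconstr (ψ l))
  have hnodown : ∀ ψ : ℕ → ℕ, StrictMono ψ → ¬ Tendsto (xs ∘ ψ) atTop atBot := by
    intro ψ hψ hcontra
    have hind' : ∀ α β : ℝ, α • u + β • (-s) = 0 → α = 0 ∧ β = 0 := by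
      intro α β h
      have h' : α • u + (-β) • s = 0 := by rw [neg_smul, ← smul_neg]; exact h
      obtain ⟨h1, h2⟩ := hindus α (-β) h'
      exact ⟨h1, neg_eq_zero.mp h2⟩
    have hneg : Tendsto (fun l => -(xs (ψ l))) atTop atTop := by
      rw [show (fun l => -(xs (ψ l))) = -(xs ∘ ψ) from rfl]
      exact tendsto_neg_atBot_atTop.comp hcontra
    have hxt : Tendsto (fun l => 1 - xs (ψ l)) atTop atTop := by
      have h := tendsto_atTop_add_const_left atTop (1 : ℝ) hneg
      simpa [sub_eq_add_neg] using h
    have hratio' : Tendsto (fun l => (1 - xs (ψ l)) / (Hs (ψ l))) atTop (nhds 0) := by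
      have h1 : Tendsto (fun l => (Hs (ψ l))⁻¹) atTop (nhds 0) :=
        (hHtop.comp hψ.tendsto_atTop).inv_tendsto_atTop
      have h2 : Tendsto (fun l => xs (ψ l) / Hs (ψ l)) atTop (nhds 0) :=
        hratio.comp hψ.tendsto_atTop
      have h3 := h1.sub h2
      rw [sub_zero] at h3
      refine h3.congr (fun l => ?_)
      rw [sub_div]
      congr 1
      rw [one_div]
    refine EA_keylemma hind' (-js) (Hs ∘ ψ) (fun l => 1 - xs (ψ l))
      (hHtop.comp hψ.tendsto_atTop) hxt hratio' (fun l => ?_)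
    have h1 := hconstr (ψ l)
    rw [show (Hs ∘ ψ) l • u + (1 - xs (ψ l)) • (-s)
          = Hs (ψ l) • u + (xs (ψ l) - 1) • s from by
        simp only [Function.comp_apply]; module,
      show (Hs ∘ ψ) l • u + ((1 - xs (ψ l)) - 1) • (-s)
          = Hs (ψ l) • u + xs (ψ l) • s from by
        simp only [Function.comp_apply]; module]
    linarith
  have hbddA : BddAbove (Set.range xs) := EA_bddAbove_of_no_subseq xs hnoup
  have hbddB : BddAbove (Set.range (fun k => -xs k)) := by
    apply EA_bddAbove_of_no_subseq
    intro ψ hψ hcontra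
    apply hnodown ψ hψ
    have h : Tendsto (fun l => -(xs (ψ l))) atTop atTop := hcontra
    have h2 := tendsto_neg_atTop_atBot.comp h
    simpa [Function.comp_def] using h2
  obtain ⟨Aup, hAup⟩ := hbddA
  obtain ⟨Alo, hAlo⟩ := hbddB
  have hmemIcc : ∀ k, xs k ∈ Set.Icc (-Alo) Aup := by
    intro k
    refine ⟨?_, hAup (Set.mem_range_self k)⟩
    have h := hAlo (Set.mem_range_self (f := fun k => -xs k) k)
    linarith
  obtain ⟨xstar, _, φ₃, hφ₃, hxconv⟩ :=
    tendsto_subseq_of_bounded (Metric.isBounded_Icc (-Alo) Aup) hmemIcc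
  -- final stage
  set p3 : ℕ → V := p2 ∘ φ₃ with hp3
  set H3 : ℕ → ℝ := Hs ∘ φ₃ with hH3
  set x3 : ℕ → ℝ := xs ∘ φ₃ with hx3
  have hH3top : Tendsto H3 atTop atTop := hHtop.comp hφ₃.tendsto_atTop
  have hp3S : ∀ k, p3 k ∈ S := fun k => hp2S _
  have hp3b : ∀ k, ‖p3 k - a‖ - ‖p3 k - b‖ = jb := fun k => hp2b (φ₃ k)
  have hp3c : ∀ k, ‖p3 k - a‖ - ‖p3 k - c‖ = jc := fun k => hp2c (φ₃ k)
  have hrepr3 : ∀ k, p3 k - a = H3 k • u + x3 k • s := fun k => hrepr _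
  -- the asymptotic defect function
  set G : ℝ → ℝ := fun t => ‖t • u + xstar • s‖ - t with hGdef
  have hGanti : Antitone G := by
    intro t t' htt'
    have h : ‖t' • u + xstar • s‖ ≤ ‖t • u + xstar • s‖ + (t' - t) := by
      have h2 : t' • u + xstar • s = (t • u + xstar • s) + (t' - t) • u := by module
      rw [h2]
      refine (norm_add_le _ _).trans ?_
      rw [norm_smul, Real.norm_eq_abs, hu1, mul_one, abs_of_nonneg (by linarith)]
    simp only [hGdef]
    linarith
  have hGbdd : BddBelow (Set.range G) := by
    refine ⟨-‖xstar • s‖, ?_⟩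
    rintro y ⟨t, rfl⟩
    have h1 : ‖t • u‖ ≤ ‖t • u + xstar • s‖ + ‖xstar • s‖ := by
      calc ‖t • u‖ = ‖(t • u + xstar • s) - xstar • s‖ := by rw [add_sub_cancel_right]
        _ ≤ ‖t • u + xstar • s‖ + ‖xstar • s‖ := norm_sub_le _ _
    have h2 : t ≤ ‖t • u‖ := by
      rw [norm_smul, Real.norm_eq_abs, hu1, mul_one]
      exact le_abs_self t
    simp only [hGdef]
    linarith
  have hGlim : Tendsto G atTop (nhds (⨅ t, G t)) := tendsto_atTop_ciInf hGanti hGbdd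
  set L : ℝ := ⨅ t, G t with hLdef
  have hGH : Tendsto (G ∘ H3) atTop (nhds L) := hGlim.comp hH3top
  -- choose indices n < m with small defect
  set ε : ℝ := 1 / (4 * ‖s‖ + 2) with hεdef
  have hεpos : 0 < ε := by
    rw [hεdef]
    positivity
  have hev1 : ∀ᶠ k in atTop, |x3 k - xstar| < ε := by
    have h := Metric.tendsto_atTop.mp hxconv ε hεpos
    obtain ⟨N, hN⟩ := h
    rw [eventually_atTop]
    exact ⟨N, fun k hk => by rw [← Real.dist_eq]; exact hN k hk⟩
  have hev2 : ∀ᶠ k in atTop, |G (H3 k) - L| < ε / 2 := by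
    have h := Metric.tendsto_atTop.mp hGH (ε / 2) (by linarith)
    obtain ⟨N, hN⟩ := h
    rw [eventually_atTop]
    exact ⟨N, fun k hk => by rw [← Real.dist_eq]; exact hN k hk⟩
  obtain ⟨n, hn1, hn2⟩ := (hev1.and hev2).exists
  obtain ⟨m, ⟨hm1, hm2⟩, hmH⟩ :=
    ((hev1.and hev2).and (hH3top.eventually_gt_atTop (H3 n))).exists
  -- the defect vanishes
  obtain ⟨n1, hn1'⟩ := hS (p3 m) (hp3S m) (p3 n) (hp3S n)
  obtain ⟨n2, hn2'⟩ := hS (p3 n) (hp3S n) a haS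
  obtain ⟨n3, hn3'⟩ := hS (p3 m) (hp3S m) a haS
  have hPQ : p3 m - p3 n = (H3 m - H3 n) • u + (x3 m - x3 n) • s := by
    have h1 := hrepr3 m
    have h2 := hrepr3 n
    have : p3 m - p3 n = (p3 m - a) - (p3 n - a) := by abel
    rw [this, h1, h2]
    module
  have hD1 : ‖p3 m - p3 n‖ ≤ (H3 m - H3 n) + |x3 m - x3 n| * ‖s‖ := by
    rw [hPQ]
    refine (norm_add_le _ _).trans ?_
    rw [norm_smul, norm_smul, Real.norm_eq_abs, Real.norm_eq_abs, hu1, mul_one,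
      abs_of_pos (by linarith : (0:ℝ) < H3 m - H3 n)]
  have hD2 : ‖p3 n - a‖ ≤ ‖H3 n • u + xstar • s‖ + |x3 n - xstar| * ‖s‖ := by
    have h1 : p3 n - a = (H3 n • u + xstar • s) + (x3 n - xstar) • s := by
      rw [hrepr3 n]; module
    rw [h1]
    refine (norm_add_le _ _).trans ?_
    rw [norm_smul, Real.norm_eq_abs]
  have hD3 : ‖H3 m • u + xstar • s‖ ≤ ‖p3 m - a‖ + |xstar - x3 m| * ‖s‖ := by
    have h1 : H3 m • u + xstar • s = (p3 m - a) + (xstar - x3 m) • s := by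
      rw [hrepr3 m]; module
    rw [h1]
    refine (norm_add_le _ _).trans ?_
    rw [norm_smul, Real.norm_eq_abs]
  have hDlt : ‖p3 m - p3 n‖ + ‖p3 n - a‖ - ‖p3 m - a‖ < 1 := by
    have hGn : G (H3 n) = ‖H3 n • u + xstar • s‖ - H3 n := rfl
    have hGm : G (H3 m) = ‖H3 m • u + xstar • s‖ - H3 m := rfl
    have hkey : ε * (4 * ‖s‖ + 2) = 1 := by
      rw [hεdef]; field_simp
    clear_value G L ε
    obtain ⟨habs1a, habs1b⟩ := abs_lt.mp hm1
    obtain ⟨habs2a, habs2b⟩ := abs_lt.mp hn1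
    obtain ⟨habs3a, habs3b⟩ := abs_lt.mp hn2
    obtain ⟨habs4a, habs4b⟩ := abs_lt.mp hm2
    have hGmn : G (H3 n) - G (H3 m) < ε := by linarith only [habs3b, habs4a]
    have hxmn : |x3 m - x3 n| ≤ |x3 m - xstar| + |x3 n - xstar| := by
      have h := abs_sub_le (x3 m) xstar (x3 n)
      rwa [abs_sub_comm xstar (x3 n)] at h
    have hsn : (0:ℝ) ≤ ‖s‖ := norm_nonneg s
    have hcomm : |xstar - x3 m| = |x3 m - xstar| := abs_sub_comm _ _
    have hP1 : |x3 m - x3 n| * ‖s‖ ≤ (2 * ε) * ‖s‖ :=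
      mul_le_mul_of_nonneg_right (by linarith) hsn
    have hP2 : |x3 n - xstar| * ‖s‖ ≤ ε * ‖s‖ :=
      mul_le_mul_of_nonneg_right (by linarith) hsn
    have hP3 : |xstar - x3 m| * ‖s‖ ≤ ε * ‖s‖ :=
      mul_le_mul_of_nonneg_right (by rw [hcomm]; linarith) hsn
    have hexp : ε * (4 * ‖s‖ + 2) = 4 * (ε * ‖s‖) + 2 * ε := by ring
    linarith
  have hD0 : 0 ≤ ‖p3 m - p3 n‖ + ‖p3 n - a‖ - ‖p3 m - a‖ := by
    have := dist_triangle (p3 m) (p3 n) a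
    rw [dist_eq_norm, dist_eq_norm, dist_eq_norm] at this
    linarith
  -- integrality forces exact degeneracy
  have heq : ‖p3 m - a‖ = ‖p3 m - p3 n‖ + ‖p3 n - a‖ := by
    rw [hn1', hn2', hn3'] at hDlt hD0 ⊢
    have h1 : (0:ℤ) ≤ (n1 : ℤ) + n2 - n3 := by exact_mod_cast (by push_cast; linarith : (0:ℝ) ≤ ((n1 : ℤ) + n2 - n3 : ℤ))
    have h2 : ((n1 : ℤ) + n2 - n3 : ℤ) < 1 := by exact_mod_cast (by push_cast; linarith : (((n1 : ℤ) + n2 - n3 : ℤ) : ℝ) < 1)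
    have h3 : (n3 : ℤ) = n1 + n2 := by omega
    exact_mod_cast congrArg (fun z : ℤ => (z : ℝ)) h3
  -- all three foci are aligned with the two points: contradiction
  have hX0 : p3 m - p3 n ≠ 0 := by
    intro h
    have h1 : χ0 (p3 m - p3 n) = H3 m - H3 n := by
      rw [show p3 m - p3 n = (p3 m - a) - (p3 n - a) from by abel, map_sub]
      rfl
    rw [h, map_zero] at h1
    linarith [hmH, h1.symm]
  have hray : ∀ y : V, ‖p3 m - y‖ = ‖p3 m - p3 n‖ + ‖p3 n - y‖ →
      ∃ t : ℝ, 0 ≤ t ∧ t • (p3 m - p3 n) = p3 n - y := by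
    intro y hy
    have h1 : ‖(p3 m - p3 n) + (p3 n - y)‖ = ‖p3 m - p3 n‖ + ‖p3 n - y‖ := by
      rw [sub_add_sub_cancel]; exact hy
    exact (sameRay_iff_norm_add.mpr h1).exists_nonneg_left hX0
  obtain ⟨ta, hta0, hta⟩ := hray a heq
  obtain ⟨tb, htb0, htb⟩ := hray b (by
    have h1 := hp3b m
    have h2 := hp3b n
    linarith [heq])
  obtain ⟨tc, htc0, htc⟩ := hray c (by
    have h1 := hp3c m
    have h2 := hp3c n
    linarith [heq])
  have hba' : b - a = (ta - tb) • (p3 m - p3 n) := by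
    rw [sub_smul, hta, htb]; abel
  have hca' : c - a = (ta - tc) • (p3 m - p3 n) := by
    rw [sub_smul, hta, htc]; abel
  have htab : ta - tb ≠ 0 := by
    intro h
    rw [h, zero_smul] at hba'
    exact hv0 hba'
  exact hc ⟨(ta - tc) / (ta - tb), by rw [hca', hba', smul_smul, div_mul_cancel₀ _ htab]⟩
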